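/- Let S be a 2-dimensional subspace of ℝ³ with orthonormal basis {e₁, e₂}, let x ∈ ℝ³ with r = |x| > 0, and let f_t(x) = √(1 + 2t/r²) x for t ≥ 0. Then the Jacobian of f_t restricted to S at x, namely √(det((df_t|_S)ᵀ (df_t|_S))), equals √(1 + [(1 + 2t/r²)² − 1] |∇^⊥ r|²), where ∇^⊥ r is the component of the unit radial vector x/r orthogonal to S. -/

import Mathlib

open scoped RealInnerProductSpace

/-- Jacobian of `f_t(x) = √(1 + 2t/r²) x` restricted to a 2-plane `S`:
`√(det((df_t|_S)ᵀ(df_t|_S))) = √(1 + [(1+2t/r²)² − 1]|∇^⊥ r|²)`. -/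
theorem stmt2 (S : Submodule ℝ (EuclideanSpace ℝ (Fin 3)))
    (hS : Module.finrank ℝ S = 2)
    (e : Fin 2 → EuclideanSpace ℝ (Fin 3))
    (he : Orthonormal ℝ e) (heS : ∀ i, e i ∈ S)
    (hspan : Submodule.span ℝ (Set.range e) = S)
    (x : EuclideanSpace ℝ (Fin 3)) (hx : x ≠ 0) (t : ℝ) (ht : 0 ≤ t)
    (f : ℝ → EuclideanSpace ℝ (Fin 3) → EuclideanSpace ℝ (Fin 3))
    (hf : ∀ s y, f s y = Real.sqrt (1 + 2 * s / ‖y‖ ^ 2) • y) :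
    Real.sqrt (Matrix.det (Matrix.of fun i j : Fin 2 =>
        ⟪fderiv ℝ (f t) x (e i), fderiv ℝ (f t) x (e j)⟫))
      = Real.sqrt (1 + ((1 + 2 * t / ‖x‖ ^ 2) ^ 2 - 1) *
          ‖(‖x‖⁻¹ • x) - (S.orthogonalProjectionOnto (‖x‖⁻¹ • x) :
            EuclideanSpace ℝ (Fin 3))‖ ^ 2) := by
  have hr : (0:ℝ) < ‖x‖ := norm_pos_iff.mpr hx
  set r : ℝ := ‖x‖
  have hr0 : r ≠ 0 := ne_of_gt hr
  set c : ℝ := 1 + 2 * t / r ^ 2 with hcdef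
  have hc1 : (1:ℝ) ≤ c := by
    rw [hcdef]
    have : 0 ≤ 2 * t / r ^ 2 := by positivity
    linarith
  have hc0 : (0:ℝ) < c := lt_of_lt_of_le one_pos hc1
  set a : ℝ := Real.sqrt c with hadef
  have ha2 : a ^ 2 = c := Real.sq_sqrt hc0.le
  have ha0 : (0:ℝ) < a := Real.sqrt_pos.mpr hc0
  set k : ℝ := -(2 * t) / (a * r ^ 4) with hkdef
  -- derivative
  have hD : ∀ v, fderiv ℝ (f t) x v = a • v + (k * ⟪x, v⟫) • x := by
    have hg : HasFDerivAt (fun y : EuclideanSpace ℝ (Fin 3) => (1 + 2*t/‖y‖^2 : ℝ))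
        ((-(4*t)/r^4) • (innerSL ℝ x)) x := by
      have h1 : HasFDerivAt (fun y : EuclideanSpace ℝ (Fin 3) => ‖y‖^2) (2 • innerSL ℝ x) x := by
        simpa using (hasFDerivAt_id x).norm_sq
      have hinv := (hasDerivAt_inv (by positivity : ‖x‖^2 ≠ 0)).comp_hasFDerivAt x h1
      have h2 := (hinv.const_mul (2*t)).const_add 1
      rw [show (fun y : EuclideanSpace ℝ (Fin 3) => (1 + 2*t/‖y‖^2 : ℝ)) =
        (fun y => 1 + 2*t * (((fun y : ℝ => y⁻¹) ∘ fun y : EuclideanSpace ℝ (Fin 3) => ‖y‖^2) y)) from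
          funext fun y => by simp [Pi.inv_apply]; ring]
      refine h2.congr_fderiv ?_
      ext v
      simp
      field_simp
      ring
    have hphi := hg.sqrt (by simpa using ne_of_gt hc0)
    have hsm := hphi.smul (hasFDerivAt_id x)
    simp only [id_eq] at hsm
    have hft : f t = fun y : EuclideanSpace ℝ (Fin 3) =>
        Real.sqrt (1 + 2*t/‖y‖^2) • y := funext fun y => hf t y
    intro v
    rw [hft, show (fun y : EuclideanSpace ℝ (Fin 3) => Real.sqrt (1 + 2*t/‖y‖^2) • y) =
      (fun y : EuclideanSpace ℝ (Fin 3) => Real.sqrt (1 + 2*t/‖y‖^2)) • id from rfl, hsm.fderiv]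
    simp only [ContinuousLinearMap.add_apply, ContinuousLinearMap.smul_apply,
      ContinuousLinearMap.smulRight_apply, ContinuousLinearMap.id_apply,
      ContinuousLinearMap.coe_smul', Pi.smul_apply, innerSL_apply_apply, smul_eq_mul]
    rw [show Real.sqrt (1 + 2*t/‖x‖^2) = a from rfl]
    congr 2
    rw [hkdef]
    field_simp
    ring
  -- orthonormality of e in ite form
  have hee : ∀ i j, ⟪e i, e j⟫ = if i = j then (1:ℝ) else 0 := by
    rw [orthonormal_iff_ite] at he
    exact he
  set u : Fin 2 → ℝ := fun i => ⟪x, e i⟫ with hudef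
  have hGram : ∀ i j, ⟪fderiv ℝ (f t) x (e i), fderiv ℝ (f t) x (e j)⟫
      = c * (if i = j then (1:ℝ) else 0) + (2*a*k + k^2*r^2) * (u i * u j) := by
    intro i j
    rw [hD, hD]
    simp only [inner_add_left, inner_add_right, real_inner_smul_left, real_inner_smul_right]
    rw [hee i j]
    have hxx : ⟪x, x⟫ = r^2 := real_inner_self_eq_norm_sq x
    have h1 : ⟪e i, x⟫ = u i := real_inner_comm _ _
    have h2 : ⟪e j, x⟫ = u j := real_inner_comm _ _
    have h3 : ⟪x, e i⟫ = u i := rfl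
    have h4 : ⟪x, e j⟫ = u j := rfl
    simp only [hxx, h1, h2, h3, h4, ← ha2]
    ring
  have hdet : Matrix.det (Matrix.of fun i j : Fin 2 =>
        ⟪fderiv ℝ (f t) x (e i), fderiv ℝ (f t) x (e j)⟫)
      = c^2 + c*(2*a*k + k^2*r^2)*(u 0^2 + u 1^2) := by
    rw [Matrix.det_fin_two]
    simp only [Matrix.of_apply, hGram]
    norm_num
    ring
  -- projection
  set y : EuclideanSpace ℝ (Fin 3) := r⁻¹ • x with hydef
  have hy1 : ‖y‖ = 1 := by
    rw [hydef, norm_smul, norm_inv, Real.norm_eq_abs, abs_of_pos hr]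
    exact inv_mul_cancel₀ hr0
  let e' : Fin 2 → S := fun i => ⟨e i, heS i⟩
  have he' : Orthonormal ℝ e' := by
    rw [orthonormal_iff_ite]
    intro i j
    simpa [e', Submodule.coe_inner] using hee i j
  have hspan' : ⊤ ≤ Submodule.span ℝ (Set.range e') := by
    have himg : S.subtype '' Set.range e' = Set.range e := by
      ext z
      simp [e', Set.range_comp]
    have hmap : Submodule.map S.subtype (Submodule.span ℝ (Set.range e')) =
        Submodule.map S.subtype ⊤ := by
      rw [Submodule.map_span, himg, Submodule.map_subtype_top, hspan]
    exact le_of_eq (Submodule.map_injective_of_injective S.injective_subtype hmap).symm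
  let b : OrthonormalBasis (Fin 2) ℝ S := OrthonormalBasis.mk he' hspan'
  have hb : ∀ i, (b i : EuclideanSpace ℝ (Fin 3)) = e i := fun i => by
    simp [b, OrthonormalBasis.coe_mk, e']
  have hproj : (S.orthogonalProjectionOnto y : EuclideanSpace ℝ (Fin 3))
      = ⟪e 0, y⟫ • e 0 + ⟪e 1, y⟫ • e 1 := by
    have hsum := b.orthogonalProjectionOnto_apply_eq_sum (𝕜 := ℝ) y
    rw [hsum, Fin.sum_univ_two]
    simp only [Submodule.coe_add, SetLike.val_smul, hb]
  have hPy : ‖(S.orthogonalProjectionOnto y : EuclideanSpace ℝ (Fin 3))‖^2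
      = ⟪e 0, y⟫^2 + ⟪e 1, y⟫^2 := by
    rw [hproj, ← real_inner_self_eq_norm_sq]
    simp only [inner_add_left, inner_add_right, real_inner_smul_left, real_inner_smul_right]
    have h00 : ⟪e 0, e 0⟫ = (1:ℝ) := by rw [hee]; norm_num
    have h01 : ⟪e 0, e 1⟫ = (0:ℝ) := by rw [hee]; norm_num
    have h10 : ⟪e 1, e 0⟫ = (0:ℝ) := by rw [hee]; norm_num
    have h11 : ⟪e 1, e 1⟫ = (1:ℝ) := by rw [hee]; norm_num
    rw [h00, h01, h10, h11]
    ring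
  set p2 : ℝ := ‖y - (S.orthogonalProjectionOnto y : EuclideanSpace ℝ (Fin 3))‖^2 with hp2def
  have hsplit : p2 = 1 - (⟪e 0, y⟫^2 + ⟪e 1, y⟫^2) := by
    have horth : ⟪y - (S.orthogonalProjectionOnto y : EuclideanSpace ℝ (Fin 3)),
        (S.orthogonalProjectionOnto y : EuclideanSpace ℝ (Fin 3))⟫ = 0 :=
      S.starProjection_inner_eq_zero y _ (S.orthogonalProjectionOnto y).2
    have hy2 : ‖y‖^2 = ‖(y - (S.orthogonalProjectionOnto y : EuclideanSpace ℝ (Fin 3)))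
        + (S.orthogonalProjectionOnto y : EuclideanSpace ℝ (Fin 3))‖^2 := by
      rw [sub_add_cancel]
    rw [norm_add_sq_real, horth, hy1] at hy2
    rw [hp2def, ← hPy]
    linarith [hy2]
  have hiy : ∀ i, ⟪e i, y⟫ = r⁻¹ * u i := by
    intro i
    rw [hydef, real_inner_smul_right, real_inner_comm]
  have husum : u 0^2 + u 1^2 = r^2 * (1 - p2) := by
    rw [hsplit, hiy, hiy]
    field_simp
    ring
  -- algebra
  have hak : a * k = -(2*t)/r^4 := by
    rw [hkdef]
    field_simp
  have hk2 : k^2 = 4*t^2/(r^8*c) := by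
    have h2 : a^2 * k^2 = 4*t^2/r^8 := by rw [← mul_pow, hak]; ring
    rw [ha2] at h2
    field_simp at h2 ⊢
    linarith [h2]
  have hbeta : c * (2*a*k + k^2*r^2) * r^2 = 1 - c^2 := by
    have hstep : c * (2*a*k + k^2*r^2) * r^2 = 2*c*(a*k)*r^2 + c*k^2*r^4 := by ring
    rw [hstep, hak, hk2, hcdef]
    field_simp
    ring
  rw [hdet, husum]
  congr 1
  have : c*(2*a*k + k^2*r^2)*(r^2*(1-p2)) = (c*(2*a*k + k^2*r^2)*r^2)*(1-p2) := by ring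
  rw [this, hbeta]
  ring
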